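/- arXiv:2106.05454 — 2 statements merged into one kernel-verified Lean document; each statement's English description precedes it below -/
import Mathlib

section
/- Define û₁ ∈ ℝ^q by √n·û₁ = 𝒞₁₁^{-1}W(1) − (η/√n)·𝒞₁₁^{-1}Σ₁₁β₁* − (λ/(2√n))·𝒞₁₁^{-1}sign(β₁*). If condition B holds, then for every j ∈ {1,…,p−q}: |(𝒞₂₁·√n·û₁ + (η/√n)·Σ₂₁β₁* − W(2))_j| ≤ λ/(2√n); equivalently, |(𝒞₂₁𝒞₁₁^{-1}(W(1) − (η/√n)Σ₁₁β₁* − (λ/(2√n))sign(β₁*)) + (η/√n)Σ₂₁β₁* − W(2))_j| ≤ λ/(2√n) for every such j. -/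
open Matrix

/-- sign function -/
noncomputable def sgn (x : ℝ) : ℝ := if 0 < x then 1 else if x < 0 then -1 else 0

/-- If condition B holds then |(𝒞₂₁·√n·û₁ + (η/√n)Σ₂₁β₁* − W(2))_j| ≤ λ/(2√n) for all j;
    equivalently |(𝒞₂₁𝒞₁₁⁻¹(W(1) − (η/√n)Σ₁₁β₁* − (λ/(2√n))sign(β₁*)) + (η/√n)Σ₂₁β₁* − W(2))_j|
    ≤ λ/(2√n). -/
theorem stmt5 (n p q : ℕ) (hn : 1 ≤ n) (hq : 1 ≤ q) (hqp : q ≤ p)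
    (X : Matrix (Fin n) (Fin p) ℝ) (eps : Fin n → ℝ)
    (betastar : Fin p → ℝ)
    (hbeta1 : ∀ j : Fin p, (j : ℕ) < q → betastar j ≠ 0)
    (hbeta2 : ∀ j : Fin p, q ≤ (j : ℕ) → betastar j = 0)
    (y : Fin n → ℝ) (hy : y = X.mulVec betastar + eps)
    (Sig : Matrix (Fin p) (Fin p) ℝ) (hSig : Sig.PosDef)
    (lam eta : ℝ) (hlam : 0 < lam) (heta : 0 < eta)
    (X1 : Matrix (Fin n) (Fin q) ℝ) (hX1 : X1 = X.submatrix id (Fin.castLE hqp))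
    (X2 : Matrix (Fin n) (Fin (p - q)) ℝ)
    (hX2 : X2 = X.submatrix id
      (fun j => Fin.cast (by omega : q + (p - q) = p) (Fin.natAdd q j)))
    (Sig11 : Matrix (Fin q) (Fin q) ℝ)
    (hSig11 : Sig11 = Sig.submatrix (Fin.castLE hqp) (Fin.castLE hqp))
    (Sig21 : Matrix (Fin (p - q)) (Fin q) ℝ)
    (hSig21 : Sig21 = Sig.submatrix
      (fun j => Fin.cast (by omega : q + (p - q) = p) (Fin.natAdd q j)) (Fin.castLE hqp))
    (beta1 : Fin q → ℝ) (hbeta1q : beta1 = fun j => betastar (Fin.castLE hqp j))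
    (C11 : Matrix (Fin q) (Fin q) ℝ) (hC11 : C11 = ((n : ℝ)⁻¹) • (X1ᵀ * X1))
    (C21 : Matrix (Fin (p - q)) (Fin q) ℝ) (hC21 : C21 = ((n : ℝ)⁻¹) • (X2ᵀ * X1))
    (W1 : Fin q → ℝ) (hW1 : W1 = ((Real.sqrt n)⁻¹) • X1ᵀ.mulVec eps)
    (W2 : Fin (p - q) → ℝ) (hW2 : W2 = ((Real.sqrt n)⁻¹) • X2ᵀ.mulVec eps)
    (CC11 : Matrix (Fin q) (Fin q) ℝ) (hCC11 : CC11 = C11 + (eta / n) • Sig11)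
    (CC21 : Matrix (Fin (p - q)) (Fin q) ℝ) (hCC21 : CC21 = C21 + (eta / n) • Sig21)
    -- definition of û₁
    (uhat1 : Fin q → ℝ)
    (huhat1 : Real.sqrt n • uhat1
      = CC11⁻¹.mulVec W1
        - (eta / Real.sqrt n) • CC11⁻¹.mulVec (Sig11.mulVec beta1)
        - (lam / (2 * Real.sqrt n)) • CC11⁻¹.mulVec fun j => sgn (beta1 j))
    -- condition B
    (hB : ∀ j : Fin (p - q),
      |(CC21 * CC11⁻¹).mulVec W1 j - W2 j| ≤ lam / (2 * Real.sqrt n)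
        - (lam / (2 * Real.sqrt n)) *
          |((CC21 * CC11⁻¹).mulVec
              ((fun k => sgn (beta1 k)) + (2 * eta / lam) • Sig11.mulVec beta1)
            - (2 * eta / lam) • Sig21.mulVec beta1) j|) :
    ∀ j : Fin (p - q),
      |(CC21.mulVec (Real.sqrt n • uhat1)
          + (eta / Real.sqrt n) • Sig21.mulVec beta1 - W2) j| ≤ lam / (2 * Real.sqrt n)
      ∧
      |((CC21 * CC11⁻¹).mulVec
            (W1 - (eta / Real.sqrt n) • Sig11.mulVec beta1
              - (lam / (2 * Real.sqrt n)) • fun k => sgn (beta1 k))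
          + (eta / Real.sqrt n) • Sig21.mulVec beta1 - W2) j| ≤ lam / (2 * Real.sqrt n) := by

  have hnpos : (0:ℝ) < n := by exact_mod_cast hn
  have hs : (0:ℝ) < Real.sqrt n := Real.sqrt_pos.mpr hnpos
  set c : ℝ := lam / (2 * Real.sqrt n) with hcdef
  have hcpos : 0 < c := by positivity
  set A : Fin (p-q) → ℝ := (CC21 * CC11⁻¹).mulVec W1 - W2 with hA
  set B : Fin (p-q) → ℝ := (CC21 * CC11⁻¹).mulVec
      ((fun k => sgn (beta1 k)) + (2 * eta / lam) • Sig11.mulVec beta1)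
      - (2 * eta / lam) • Sig21.mulVec beta1 with hBdef
  intro j
  have hval2 : ((CC21 * CC11⁻¹).mulVec
        (W1 - (eta / Real.sqrt n) • Sig11.mulVec beta1
          - (lam / (2 * Real.sqrt n)) • fun k => sgn (beta1 k))
      + (eta / Real.sqrt n) • Sig21.mulVec beta1 - W2) j = A j - c * B j := by
    have hkey : c * (2 * eta / lam) = eta / Real.sqrt n := by
      field_simp [hcdef]
      rw [hcdef, div_mul_eq_mul_div, div_mul_eq_mul_div, div_eq_iff (by positivity)]; ring
    simp only [hA, hBdef, mulVec_sub, mulVec_add, mulVec_smul, Pi.add_apply, Pi.sub_apply,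
      Pi.smul_apply, smul_eq_mul, ← hcdef]
    rw [← hkey]
    ring
  have hval1 : (CC21.mulVec (Real.sqrt n • uhat1)
      + (eta / Real.sqrt n) • Sig21.mulVec beta1 - W2) j = A j - c * B j := by
    rw [← hval2, huhat1]
    simp only [mulVec_sub, mulVec_smul, ← mulVec_mulVec, ← hcdef]
  have hb := hB j
  have hAj : A j = ((CC21 * CC11⁻¹).mulVec W1) j - W2 j := rfl
  rw [← hAj] at hb
  have habs : |A j - c * B j| ≤ |A j| + c * |B j| := by
    calc |A j - c * B j| ≤ |A j| + |c * B j| := abs_sub _ _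
    _ = |A j| + c * |B j| := by rw [abs_mul, abs_of_pos hcpos]
  constructor
  · rw [hval1]; linarith [abs_nonneg (B j), mul_nonneg hcpos.le (abs_nonneg (B j))]
  · rw [hval2]; linarith
end

section
/- Let M₃ > 0 and α > 0 be constants with λ/n ≥ 2·√(2+√2)·√M₃·σ/α. Then the probability that condition B fails satisfies: ℙ(B_nᶜ) ≤ (p−q)·exp(−n/2) + (p−q)·ℙ(λ_max(H_B H_Bᵀ) > M₃) + (p−q)·ℙ(G_nᶜ), where G_n is the GIC event that max_{1≤j≤p−q} |(𝒞₂₁𝒞₁₁^{-1}(sign(β₁*) + (2η/λ)Σ₁₁β₁*) − (2η/λ)Σ₂₁β₁*)_j| ≤ 1 − α. -/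
open Matrix MeasureTheory ProbabilityTheory
open scoped ENNReal NNReal

/-- largest eigenvalue of a (symmetric) real matrix -/
noncomputable def lamMax {m : ℕ} (M : Matrix (Fin m) (Fin m) ℝ) : ℝ :=
  sSup {μ : ℝ | ∃ v : Fin m → ℝ, v ≠ 0 ∧ M.mulVec v = μ • v}

lemma diag_le_lamMax {m : ℕ} {M : Matrix (Fin m) (Fin m) ℝ}
    (hsymm : Mᵀ = M) (j : Fin m) : M j j ≤ lamMax M := by
  have hsymm' : ∀ k l, M k l = M l k := by
    intro k l; exact (congrFun (congrFun hsymm k) l).symm ▸ rfl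
  have hM : M.IsHermitian := by
    rw [Matrix.IsHermitian]
    ext i k
    simpa [Matrix.conjTranspose_apply] using congrFun (congrFun hsymm i) k
  have hBdd : BddAbove {μ : ℝ | ∃ v : Fin m → ℝ, v ≠ 0 ∧ M.mulVec v = μ • v} := by
    refine ⟨∑ i, ∑ k, |M i k|, fun μ hμ => ?_⟩
    obtain ⟨v, hv0, hveq⟩ := hμ
    obtain ⟨i₀, -, hi₀⟩ := Finset.exists_max_image Finset.univ (fun i => |v i|)
      ⟨j, Finset.mem_univ j⟩
    have hvi₀ : 0 < |v i₀| := by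
      rcases Function.ne_iff.mp hv0 with ⟨k, hk⟩
      have h1 := hi₀ k (Finset.mem_univ k)
      have h2 : 0 < |v k| := abs_pos.mpr hk
      linarith
    have h2 : μ * v i₀ = ∑ k, M i₀ k * v k := by
      have := congrFun hveq i₀
      simpa [Matrix.mulVec, dotProduct] using this.symm
    have h1 : |μ| * |v i₀| ≤ (∑ k, |M i₀ k|) * |v i₀| := by
      calc |μ| * |v i₀| = |μ * v i₀| := (abs_mul _ _).symm
        _ = |∑ k, M i₀ k * v k| := by rw [h2]
        _ ≤ ∑ k, |M i₀ k * v k| := Finset.abs_sum_le_sum_abs _ _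
        _ ≤ ∑ k, |M i₀ k| * |v i₀| := by
            refine Finset.sum_le_sum fun k _ => ?_
            rw [abs_mul]
            exact mul_le_mul_of_nonneg_left (hi₀ k (Finset.mem_univ k)) (abs_nonneg _)
        _ = (∑ k, |M i₀ k|) * |v i₀| := by rw [Finset.sum_mul]
    have hμle : |μ| ≤ ∑ k, |M i₀ k| := le_of_mul_le_mul_right h1 hvi₀
    calc μ ≤ |μ| := le_abs_self μ
      _ ≤ ∑ k, |M i₀ k| := hμle
      _ ≤ ∑ i, ∑ k, |M i k| := Finset.single_le_sum (f := fun i => ∑ k, |M i k|)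
            (fun i _ => Finset.sum_nonneg fun k _ => abs_nonneg _) (Finset.mem_univ i₀)
  have heig : ∀ i, hM.eigenvalues i ≤ lamMax M := by
    intro i
    apply le_csSup hBdd
    refine ⟨hM.eigenvectorBasis i, ?_, hM.mulVec_eigenvectorBasis i⟩
    intro h
    exact hM.eigenvectorBasis.orthonormal.ne_zero i (by ext k; exact congrFun h k)
  set b := hM.eigenvectorBasis with hb
  set x : EuclideanSpace ℝ (Fin m) := EuclideanSpace.single j 1 with hx
  set y : EuclideanSpace ℝ (Fin m) := WithLp.toLp 2 (M.mulVec x) with hy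
  have hinner : ∀ u w : EuclideanSpace ℝ (Fin m), (inner ℝ u w : ℝ) = ∑ i, u i * w i := by
    intro u w
    simp [PiLp.inner_apply, RCLike.inner_apply, mul_comm]
  have hxapp : ∀ i, x i = if i = j then 1 else 0 := by
    intro i; rw [hx]; simp [EuclideanSpace.single_apply]
  have hxy : (inner ℝ x y : ℝ) = M j j := by
    rw [hinner]
    simp only [hxapp, ite_mul, one_mul, zero_mul, Finset.sum_ite_eq', Finset.mem_univ, if_true]
    rw [hy]
    simp [Matrix.mulVec, dotProduct, hxapp]
  have hbiy : ∀ i, (inner ℝ (b i) y : ℝ) = hM.eigenvalues i * (inner ℝ x (b i) : ℝ) := by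
    intro i
    have hev := hM.mulVec_eigenvectorBasis i
    have hev' : ∀ l, ∑ k, M l k * b i k = hM.eigenvalues i * b i l := by
      intro l
      have := congrFun hev l
      simpa [Matrix.mulVec, dotProduct] using this
    rw [hinner, hinner]
    calc ∑ k, b i k * y k = ∑ k, ∑ l, b i k * (M k l * x l) := by
          refine Finset.sum_congr rfl fun k _ => ?_
          rw [hy]
          simp [Matrix.mulVec, dotProduct, Finset.mul_sum]
      _ = ∑ l, ∑ k, b i k * (M k l * x l) := Finset.sum_comm
      _ = ∑ l, (∑ k, M l k * b i k) * x l := by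
          refine Finset.sum_congr rfl fun l _ => ?_
          rw [Finset.sum_mul]
          refine Finset.sum_congr rfl fun k _ => ?_
          rw [hsymm' k l]; ring
      _ = ∑ l, hM.eigenvalues i * b i l * x l := by
          refine Finset.sum_congr rfl fun l _ => ?_
          rw [hev' l]
      _ = hM.eigenvalues i * ∑ l, x l * b i l := by
          rw [Finset.mul_sum]; refine Finset.sum_congr rfl fun l _ => ?_; ring
  have hparseval : ∑ i, (inner ℝ x (b i) : ℝ)^2 = 1 := by
    have h := b.sum_inner_mul_inner x x
    have hxx : (inner ℝ x x : ℝ) = 1 := by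
      rw [hinner]
      simp [hxapp]
    rw [hxx] at h
    rw [← h]
    refine Finset.sum_congr rfl fun i _ => ?_
    rw [sq]
    congr 1
    exact real_inner_comm _ _
  have hdecomp := b.sum_inner_mul_inner x y
  rw [hxy] at hdecomp
  rw [← hdecomp]
  calc ∑ i, (inner ℝ x (b i) : ℝ) * (inner ℝ (b i) y : ℝ)
      = ∑ i, hM.eigenvalues i * (inner ℝ x (b i) : ℝ)^2 := by
        refine Finset.sum_congr rfl fun i _ => ?_
        rw [hbiy i, sq]; ring
    _ ≤ ∑ i, lamMax M * (inner ℝ x (b i) : ℝ)^2 := by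
        refine Finset.sum_le_sum fun i _ => ?_
        exact mul_le_mul_of_nonneg_right (heig i) (sq_nonneg _)
    _ = lamMax M := by rw [← Finset.mul_sum, hparseval, mul_one]


lemma gauss_sq_mgf {sigma : ℝ} (hs : 0 < sigma) :
    (∫ x : ℝ, Real.exp ((4 * sigma ^ 2)⁻¹ * x ^ 2)
      ∂(gaussianReal 0 ⟨sigma ^ 2, sq_nonneg sigma⟩)) = Real.sqrt 2 ∧
    Integrable (fun x : ℝ => Real.exp ((4 * sigma ^ 2)⁻¹ * x ^ 2))
      (gaussianReal 0 ⟨sigma ^ 2, sq_nonneg sigma⟩) := by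
  set v : ℝ≥0 := ⟨sigma ^ 2, sq_nonneg sigma⟩ with hv
  have hv0 : v ≠ 0 := by
    intro h
    have : sigma ^ 2 = 0 := congrArg (fun x : ℝ≥0 => (x : ℝ)) h
    nlinarith
  have hvr : (v : ℝ) = sigma ^ 2 := rfl
  set t : ℝ := (4 * sigma ^ 2)⁻¹ with ht
  have ht0 : 0 < t := by positivity
  have hsig2 : (0:ℝ) < sigma ^ 2 := by positivity
  -- gaussianReal as withDensity with ℝ≥0 density
  have hgr : gaussianReal 0 v
      = volume.withDensity (fun x => ((gaussianPDFReal 0 v x).toNNReal : ℝ≥0∞)) := by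
    rw [gaussianReal_of_var_ne_zero _ hv0]
    rfl
  have hmeas : Measurable (fun x => (gaussianPDFReal 0 v x).toNNReal) :=
    (measurable_gaussianPDFReal 0 v).real_toNNReal
  have hkey : ∀ x : ℝ, (gaussianPDFReal 0 v x).toNNReal • Real.exp (t * x ^ 2)
      = (Real.sqrt (2 * Real.pi * sigma ^ 2))⁻¹ * Real.exp (-t * x ^ 2) := by
    intro x
    have hpdf : gaussianPDFReal 0 v x
        = (Real.sqrt (2 * Real.pi * sigma ^ 2))⁻¹ * Real.exp (-(x ^ 2) / (2 * sigma ^ 2)) := by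
      rw [gaussianPDFReal]
      norm_num [hvr]
    rw [NNReal.smul_def, Real.coe_toNNReal _ (gaussianPDFReal_nonneg 0 v x), hpdf,
      smul_eq_mul, mul_assoc, ← Real.exp_add]
    congr 2
    rw [ht]
    field_simp
    ring
  constructor
  · rw [hgr, integral_withDensity_eq_integral_smul hmeas]
    simp only [hkey]
    rw [integral_const_mul, integral_gaussian]
    rw [← Real.sqrt_inv, ← Real.sqrt_mul (by positivity)]
    rw [show (2 * Real.pi * sigma ^ 2)⁻¹ * (Real.pi / t) = 2 by
      rw [ht]; field_simp; ring]
  · rw [hgr, integrable_withDensity_iff_integrable_smul hmeas]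
    have : Integrable (fun x : ℝ =>
        (Real.sqrt (2 * Real.pi * sigma ^ 2))⁻¹ * Real.exp (-t * x ^ 2)) volume := by
      exact (integrable_exp_neg_mul_sq ht0).const_mul _
    refine this.congr (Filter.Eventually.of_forall fun x => ?_)
    exact (hkey x).symm

lemma gauss_sq_tail {Ω : Type*} [MeasureSpace Ω] [IsProbabilityMeasure (ℙ : Measure Ω)]
    {n : ℕ} (hn : 1 ≤ n) {sigma : ℝ} (hs : 0 < sigma) (eps : Ω → Fin n → ℝ)
    (hmeas : Measurable eps)
    (hind : iIndepFun (fun i ω => eps ω i) ℙ)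
    (hgauss : ∀ i : Fin n, Measure.map (fun ω => eps ω i) ℙ
      = gaussianReal 0 ⟨sigma ^ 2, sq_nonneg sigma⟩) :
    ℙ {ω | (2 + Real.sqrt 2) * n * sigma ^ 2 ≤ ∑ i, (eps ω i) ^ 2}
      ≤ ENNReal.ofReal (Real.exp (-(n : ℝ) / 2)) := by
  set t : ℝ := (4 * sigma ^ 2)⁻¹ with ht
  have ht0 : 0 < t := by positivity
  set c : ℝ := (2 + Real.sqrt 2) * n * sigma ^ 2 with hc
  set X : Fin n → Ω → ℝ := fun i ω => (eps ω i) ^ 2 with hX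
  have hXmeas : ∀ i, Measurable (X i) :=
    fun i => ((measurable_pi_apply i).comp hmeas).pow_const 2
  have hXind : iIndepFun X ℙ :=
    hind.comp (fun _ => fun x : ℝ => x ^ 2) (fun _ => measurable_id.pow_const 2)
  have hgmeas : ∀ m : Measure ℝ, AEStronglyMeasurable (fun x : ℝ => Real.exp (t * x ^ 2)) m :=
    fun m => (Real.continuous_exp.comp (by continuity)).aestronglyMeasurable
  have hemeas : ∀ i : Fin n, AEMeasurable (fun ω => eps ω i) ℙ :=
    fun i => ((measurable_pi_apply i).comp hmeas).aemeasurable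
  have hint : ∀ i, Integrable (fun ω => Real.exp (t * X i ω)) ℙ := by
    intro i
    have h := (gauss_sq_mgf hs).2
    rw [← hgauss i] at h
    exact (integrable_map_measure (hgmeas _) (hemeas i)).mp h
  have hmgf : ∀ i, mgf (X i) ℙ t = Real.sqrt 2 := by
    intro i
    rw [mgf]
    have : (∫ ω, Real.exp (t * X i ω) ∂ℙ)
        = ∫ x, Real.exp (t * x ^ 2) ∂(Measure.map (fun ω => eps ω i) ℙ) := by
      rw [integral_map (hemeas i) (hgmeas _)]
    rw [this, hgauss i]
    exact (gauss_sq_mgf hs).1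
  have hSint : Integrable (fun ω => Real.exp (t * (∑ i, X i) ω)) ℙ :=
    hXind.integrable_exp_mul_sum hXmeas (fun i _ => hint i)
  have hcher := measure_ge_le_exp_mul_mgf (μ := ℙ) (X := ∑ i, X i) c ht0.le hSint
  have hmgfsum : mgf (∑ i, X i) ℙ t = Real.sqrt 2 ^ n := by
    rw [hXind.mgf_sum hXmeas Finset.univ]
    simp [hmgf]
  rw [hmgfsum] at hcher
  have hseteq : {ω | c ≤ ∑ i, (eps ω i) ^ 2} = {ω | c ≤ (∑ i, X i) ω} := by
    ext ω; simp [hX, Finset.sum_apply]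
  have hnum : Real.exp (-t * c) * Real.sqrt 2 ^ n ≤ Real.exp (-(n : ℝ) / 2) := by
    have h2 : Real.sqrt 2 ^ n = Real.exp ((n : ℝ) * (Real.log 2 / 2)) := by
      rw [← Real.log_sqrt (by norm_num : (0:ℝ) ≤ 2)]
      rw [Real.exp_nat_mul, Real.exp_log (Real.sqrt_pos.mpr (by norm_num))]
    have htc : t * c = (2 + Real.sqrt 2) * n / 4 := by
      rw [ht, hc]
      field_simp
    rw [h2, ← Real.exp_add, Real.exp_le_exp, neg_mul, htc]
    have hl : Real.log 2 < 0.6931471808 := Real.log_two_lt_d9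
    have hsq : (1.3862943616 : ℝ) < Real.sqrt 2 := by
      nlinarith [Real.sq_sqrt (by norm_num : (0:ℝ) ≤ 2), Real.sqrt_nonneg 2]
    have hcoef : Real.log 2 / 2 - (2 + Real.sqrt 2) / 4 + 1 / 2 ≤ 0 := by nlinarith
    have hn0 : (0:ℝ) ≤ (n:ℝ) := Nat.cast_nonneg n
    nlinarith [mul_nonneg hn0 (neg_nonneg.mpr hcoef)]
  calc ℙ {ω | c ≤ ∑ i, (eps ω i) ^ 2}
      = ENNReal.ofReal ((ℙ {ω | c ≤ (∑ i, X i) ω}).toReal) := by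
        rw [hseteq, ENNReal.ofReal_toReal (measure_ne_top _ _)]
    _ ≤ ENNReal.ofReal (Real.exp (-t * c) * Real.sqrt 2 ^ n) :=
        ENNReal.ofReal_le_ofReal hcher
    _ ≤ ENNReal.ofReal (Real.exp (-(n : ℝ) / 2)) := ENNReal.ofReal_le_ofReal hnum


/-- Bound on the probability that condition B fails:
    ℙ(B_nᶜ) ≤ (p−q)·exp(−n/2) + (p−q)·ℙ(λ_max(H_B H_Bᵀ) > M₃) + (p−q)·ℙ(G_nᶜ),
    where G_n is the GIC event. -/
theorem stmt14 (n p q : ℕ) (hn : 1 ≤ n) (hq : 1 ≤ q) (hqp : q < p)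
    (Ω : Type*) [MeasureSpace Ω] [IsProbabilityMeasure (ℙ : Measure Ω)]
    (sigma : ℝ) (hsigma : 0 < sigma)
    (lam eta M3 alpha : ℝ) (hlam : 0 < lam) (heta : 0 < eta) (hM3 : 0 < M3)
    (halpha : 0 < alpha)
    (Sig : Matrix (Fin p) (Fin p) ℝ) (hSig : Sig.PosDef)
    (Sig11 : Matrix (Fin q) (Fin q) ℝ)
    (hSig11 : Sig11 = Sig.submatrix (Fin.castLE hqp.le) (Fin.castLE hqp.le))
    (Sig21 : Matrix (Fin (p - q)) (Fin q) ℝ)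
    (hSig21 : Sig21 = Sig.submatrix
      (fun j => Fin.cast (by omega : q + (p - q) = p) (Fin.natAdd q j)) (Fin.castLE hqp.le))
    -- X is a random (measurable) n×p matrix
    (X : Ω → Matrix (Fin n) (Fin p) ℝ) (hX_meas : Measurable fun ω => fun i j => X ω i j)
    -- ε has i.i.d. centered Gaussian coordinates with variance σ²
    (eps : Ω → Fin n → ℝ) (heps_meas : Measurable eps)
    (heps_indep : iIndepFun (fun i ω => eps ω i) ℙ)
    (heps_gauss : ∀ i : Fin n,
      Measure.map (fun ω => eps ω i) ℙ = gaussianReal 0 ⟨sigma ^ 2, sq_nonneg sigma⟩)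
    -- the linear model y = Xβ* + ε
    (betastar : Fin p → ℝ)
    (hbeta1 : ∀ j : Fin p, (j : ℕ) < q → betastar j ≠ 0)
    (hbeta2 : ∀ j : Fin p, q ≤ (j : ℕ) → betastar j = 0)
    (y : Ω → Fin n → ℝ) (hy : ∀ ω, y ω = (X ω).mulVec betastar + eps ω)
    (beta1 : Fin q → ℝ) (hbeta1q : beta1 = fun j => betastar (Fin.castLE hqp.le j))
    -- blocks and derived quantities
    (X1 : Ω → Matrix (Fin n) (Fin q) ℝ)
    (hX1 : ∀ ω, X1 ω = (X ω).submatrix id (Fin.castLE hqp.le))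
    (X2 : Ω → Matrix (Fin n) (Fin (p - q)) ℝ)
    (hX2 : ∀ ω, X2 ω = (X ω).submatrix id
      (fun j => Fin.cast (by omega : q + (p - q) = p) (Fin.natAdd q j)))
    (C11 : Ω → Matrix (Fin q) (Fin q) ℝ)
    (hC11 : ∀ ω, C11 ω = ((n : ℝ)⁻¹) • ((X1 ω)ᵀ * X1 ω))
    (C21 : Ω → Matrix (Fin (p - q)) (Fin q) ℝ)
    (hC21 : ∀ ω, C21 ω = ((n : ℝ)⁻¹) • ((X2 ω)ᵀ * X1 ω))
    (W1 : Ω → Fin q → ℝ) (hW1 : ∀ ω, W1 ω = ((Real.sqrt n)⁻¹) • (X1 ω)ᵀ.mulVec (eps ω))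
    (W2 : Ω → Fin (p - q) → ℝ)
    (hW2 : ∀ ω, W2 ω = ((Real.sqrt n)⁻¹) • (X2 ω)ᵀ.mulVec (eps ω))
    (CC11 : Ω → Matrix (Fin q) (Fin q) ℝ)
    (hCC11 : ∀ ω, CC11 ω = C11 ω + (eta / n) • Sig11)
    (CC21 : Ω → Matrix (Fin (p - q)) (Fin q) ℝ)
    (hCC21 : ∀ ω, CC21 ω = C21 ω + (eta / n) • Sig21)
    (HB : Ω → Matrix (Fin (p - q)) (Fin n) ℝ)
    (hHB : ∀ ω, HB ω = ((Real.sqrt n)⁻¹) • (CC21 ω * (CC11 ω)⁻¹ * (X1 ω)ᵀ - (X2 ω)ᵀ))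
    -- the event B_n
    (Bn : Set Ω)
    (hBn : Bn = {ω | ∀ j : Fin (p - q),
      |(CC21 ω * (CC11 ω)⁻¹).mulVec (W1 ω) j - W2 ω j| ≤ lam / (2 * Real.sqrt n)
        - (lam / (2 * Real.sqrt n)) *
          |((CC21 ω * (CC11 ω)⁻¹).mulVec
              ((fun k => sgn (beta1 k)) + (2 * eta / lam) • Sig11.mulVec beta1)
            - (2 * eta / lam) • Sig21.mulVec beta1) j|})
    -- the GIC event G_n
    (Gn : Set Ω)
    (hGn : Gn = {ω | ∀ j : Fin (p - q),
      |((CC21 ω * (CC11 ω)⁻¹).mulVec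
          ((fun k => sgn (beta1 k)) + (2 * eta / lam) • Sig11.mulVec beta1)
        - (2 * eta / lam) • Sig21.mulVec beta1) j| ≤ 1 - alpha})
    -- assumption on the constants
    (hlamn : lam / n ≥ 2 * Real.sqrt (2 + Real.sqrt 2) * Real.sqrt M3 * sigma / alpha) :
    ℙ Bnᶜ
      ≤ ENNReal.ofReal (((p : ℝ) - q) * Real.exp (-(n : ℝ) / 2))
        + ((p - q : ℕ) : ℝ≥0∞) * ℙ {ω | M3 < lamMax (HB ω * (HB ω)ᵀ)}
        + ((p - q : ℕ) : ℝ≥0∞) * ℙ Gnᶜ := by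
  have hn0 : (0:ℝ) < (n:ℝ) := by exact_mod_cast hn
  have hsqn : (0:ℝ) < Real.sqrt n := Real.sqrt_pos.mpr hn0
  set c : ℝ := (2 + Real.sqrt 2) * n * sigma ^ 2 with hc
  set A : Set Ω := {ω | c ≤ ∑ i, (eps ω i) ^ 2} with hAdef
  set L : Set Ω := {ω | M3 < lamMax (HB ω * (HB ω)ᵀ)} with hLdef
  have hincl : Bnᶜ ⊆ A ∪ (L ∪ Gnᶜ) := by
    intro ω hω
    by_contra hcon
    simp only [Set.mem_union, not_or] at hcon
    obtain ⟨hnA, hnL, hnG⟩ := hcon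
    have hsum : ∑ i, (eps ω i) ^ 2 ≤ c := (not_le.mp hnA).le
    have hlm : lamMax (HB ω * (HB ω)ᵀ) ≤ M3 := not_lt.mp hnL
    have hGmem : ω ∈ Gn := Set.not_notMem.mp hnG
    rw [hGn] at hGmem
    apply hω
    rw [hBn]
    intro j
    have hGj := hGmem j
    -- identify the LHS with a row of H_B applied to ε
    have e1 : (CC21 ω * (CC11 ω)⁻¹).mulVec (W1 ω)
        = (Real.sqrt n)⁻¹ • ((CC21 ω * (CC11 ω)⁻¹ * (X1 ω)ᵀ).mulVec (eps ω)) := by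
      rw [hW1 ω, Matrix.mulVec_smul, Matrix.mulVec_mulVec]
    have e2 : (HB ω).mulVec (eps ω)
        = (Real.sqrt n)⁻¹ • ((CC21 ω * (CC11 ω)⁻¹ * (X1 ω)ᵀ).mulVec (eps ω))
          - (Real.sqrt n)⁻¹ • ((X2 ω)ᵀ.mulVec (eps ω)) := by
      rw [hHB ω, Matrix.smul_mulVec, Matrix.sub_mulVec, smul_sub]
    have hid : (CC21 ω * (CC11 ω)⁻¹).mulVec (W1 ω) j - W2 ω j
        = ∑ k, HB ω j k * eps ω k := by
      have : (HB ω).mulVec (eps ω) j = ∑ k, HB ω j k * eps ω k := by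
        simp [Matrix.mulVec, dotProduct]
      rw [← this, e1, e2, hW2 ω]
      simp
    -- Cauchy-Schwarz
    have hCSu := Real.sum_mul_le_sqrt_mul_sqrt Finset.univ
      (fun k => HB ω j k) (fun k => eps ω k)
    have hCSl := Real.sum_mul_le_sqrt_mul_sqrt Finset.univ
      (fun k => -(HB ω j k)) (fun k => eps ω k)
    simp only [neg_mul, Finset.sum_neg_distrib, neg_sq] at hCSl
    have habs : |∑ k, HB ω j k * eps ω k|
        ≤ Real.sqrt (∑ k, HB ω j k ^ 2) * Real.sqrt (∑ k, eps ω k ^ 2) := by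
      rw [abs_le]
      constructor
      · linarith
      · exact hCSu
    -- diagonal entry bound
    have hsymHB : (HB ω * (HB ω)ᵀ)ᵀ = HB ω * (HB ω)ᵀ := by
      rw [Matrix.transpose_mul, Matrix.transpose_transpose]
    have hdiag : ∑ k, HB ω j k ^ 2 = (HB ω * (HB ω)ᵀ) j j := by
      simp [Matrix.mul_apply, sq]
    have h1 : ∑ k, HB ω j k ^ 2 ≤ M3 := by
      rw [hdiag]
      exact le_trans (diag_le_lamMax hsymHB j) hlm
    have h2 : Real.sqrt (∑ k, HB ω j k ^ 2) ≤ Real.sqrt M3 := Real.sqrt_le_sqrt h1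
    have hcsqrt : Real.sqrt c = Real.sqrt (2 + Real.sqrt 2) * Real.sqrt n * sigma := by
      rw [hc, Real.sqrt_mul (by positivity), Real.sqrt_mul (by positivity),
        Real.sqrt_sq hsigma.le]
    have h3 : Real.sqrt (∑ k, eps ω k ^ 2)
        ≤ Real.sqrt (2 + Real.sqrt 2) * Real.sqrt n * sigma := by
      rw [← hcsqrt]
      exact Real.sqrt_le_sqrt hsum
    have hprod : Real.sqrt (∑ k, HB ω j k ^ 2) * Real.sqrt (∑ k, eps ω k ^ 2)
        ≤ Real.sqrt M3 * (Real.sqrt (2 + Real.sqrt 2) * Real.sqrt n * sigma) :=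
      mul_le_mul h2 h3 (Real.sqrt_nonneg _) (Real.sqrt_nonneg _)
    -- the constants assumption
    rw [ge_iff_le, div_le_div_iff₀ halpha hn0] at hlamn
    have hss : Real.sqrt n * Real.sqrt n = (n:ℝ) := Real.mul_self_sqrt (Nat.cast_nonneg n)
    have hkey2 : Real.sqrt M3 * (Real.sqrt (2 + Real.sqrt 2) * Real.sqrt n * sigma)
        ≤ lam / (2 * Real.sqrt n) * alpha := by
      rw [div_mul_eq_mul_div, le_div_iff₀ (by positivity)]
      have heq : Real.sqrt M3 * (Real.sqrt (2 + Real.sqrt 2) * Real.sqrt n * sigma)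
          * (2 * Real.sqrt n)
          = 2 * Real.sqrt (2 + Real.sqrt 2) * Real.sqrt M3 * sigma * (n:ℝ) := by
        linear_combination (Real.sqrt M3 * Real.sqrt (2 + Real.sqrt 2) * sigma * 2) * hss
      linarith
    have hfin : lam / (2 * Real.sqrt n) * alpha
        ≤ lam / (2 * Real.sqrt n)
          - lam / (2 * Real.sqrt n) *
            |((CC21 ω * (CC11 ω)⁻¹).mulVec
                ((fun k => sgn (beta1 k)) + (2 * eta / lam) • Sig11.mulVec beta1)
              - (2 * eta / lam) • Sig21.mulVec beta1) j| := by
      have hpos : 0 < lam / (2 * Real.sqrt n) := by positivity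
      nlinarith
    rw [hid]
    calc |∑ k, HB ω j k * eps ω k|
        ≤ Real.sqrt (∑ k, HB ω j k ^ 2) * Real.sqrt (∑ k, eps ω k ^ 2) := habs
      _ ≤ Real.sqrt M3 * (Real.sqrt (2 + Real.sqrt 2) * Real.sqrt n * sigma) := hprod
      _ ≤ lam / (2 * Real.sqrt n) * alpha := hkey2
      _ ≤ _ := hfin
  -- assemble the measure bound
  have h1pq : (1:ℝ) ≤ (p:ℝ) - q := by
    have : (q:ℝ) + 1 ≤ (p:ℝ) := by exact_mod_cast hqp
    linarith
  have hcast : (1:ℝ≥0∞) ≤ ((p - q : ℕ) : ℝ≥0∞) := by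
    exact_mod_cast Nat.one_le_cast.mpr (by omega : 1 ≤ p - q)
  have hPA : ℙ A ≤ ENNReal.ofReal (((p : ℝ) - q) * Real.exp (-(n : ℝ) / 2)) := by
    refine le_trans (gauss_sq_tail hn hsigma eps heps_meas heps_indep heps_gauss) ?_
    refine ENNReal.ofReal_le_ofReal ?_
    exact le_mul_of_one_le_left (Real.exp_pos _).le h1pq
  have hPL : ℙ L ≤ ((p - q : ℕ) : ℝ≥0∞) * ℙ L := le_mul_of_one_le_left zero_le hcast
  have hPG : ℙ Gnᶜ ≤ ((p - q : ℕ) : ℝ≥0∞) * ℙ Gnᶜ := le_mul_of_one_le_left zero_le hcast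
  calc ℙ Bnᶜ ≤ ℙ (A ∪ (L ∪ Gnᶜ)) := measure_mono hincl
    _ ≤ ℙ A + ℙ (L ∪ Gnᶜ) := measure_union_le _ _
    _ ≤ ℙ A + (ℙ L + ℙ Gnᶜ) := add_le_add_right (measure_union_le _ _) _
    _ ≤ ENNReal.ofReal (((p : ℝ) - q) * Real.exp (-(n : ℝ) / 2))
        + (((p - q : ℕ) : ℝ≥0∞) * ℙ L + ((p - q : ℕ) : ℝ≥0∞) * ℙ Gnᶜ) :=
        add_le_add hPA (add_le_add hPL hPG)
    _ = _ := by rw [← add_assoc]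
end
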